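/- arXiv:1503.00407 — 3 statements merged into one kernel-verified Lean document; each statement's English description precedes it below -/
import Mathlib

section
/- Harmonic oscillator counterexample: the curves q_k(t) = (a_k cos(ωt), b_k sin(ωt)), k = 1..N, with ω² = Σ m_k, Σ m_k a_k = Σ m_k b_k = 0, solve the N-body equations of motion m_k q̈_k = Σ_{i≠k} m_i m_k (q_i − q_k) for the potential α = −2 (U = −(1/2)Σ_{i<j} m_i m_j |q_i − q_j|²); moreover if Σ m_k a_k² = Σ m_k b_k² = c then the moment of inertia I(t) = Σ m_k |q_k(t)|² = c is constant, while the motion is generically not a rigid rotation. -/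
open Finset

private lemma omega_t_deriv (ω t : ℝ) : HasDerivAt (fun t : ℝ => ω * t) ω t := by
  simpa using (hasDerivAt_id t).const_mul ω

private lemma cos_deriv (A ω : ℝ) (t : ℝ) :
    HasDerivAt (fun t => A * Real.cos (ω * t)) (-(A * ω) * Real.sin (ω * t)) t := by
  have h2 := (Real.hasDerivAt_cos (ω * t)).comp t (omega_t_deriv ω t)
  have h3 : HasDerivAt (fun t => A * Real.cos (ω * t)) (A * (-Real.sin (ω * t) * ω)) t :=
    h2.const_mul A
  convert h3 using 1
  ring

private lemma sin_deriv (B ω : ℝ) (t : ℝ) :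
    HasDerivAt (fun t => B * Real.sin (ω * t)) ((B * ω) * Real.cos (ω * t)) t := by
  have h2 := (Real.hasDerivAt_sin (ω * t)).comp t (omega_t_deriv ω t)
  have h3 : HasDerivAt (fun t => B * Real.sin (ω * t)) (B * (Real.cos (ω * t) * ω)) t :=
    h2.const_mul B
  convert h3 using 1
  ring

private lemma q_deriv (A B ω : ℝ) (t : ℝ) :
    HasDerivAt (fun t : ℝ =>
      ((A * Real.cos (ω * t) : ℝ) : ℂ) + Complex.I * ((B * Real.sin (ω * t) : ℝ) : ℂ))
      (((-(A * ω) * Real.sin (ω * t) : ℝ) : ℂ)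
        + Complex.I * (((B * ω) * Real.cos (ω * t) : ℝ) : ℂ)) t := by
  exact ((cos_deriv A ω t).ofReal_comp).add (((sin_deriv B ω t).ofReal_comp).const_mul Complex.I)

private lemma q_deriv2 (A B ω : ℝ) (t : ℝ) :
    HasDerivAt (fun t : ℝ =>
      ((A * Real.sin (ω * t) : ℝ) : ℂ) + Complex.I * ((B * Real.cos (ω * t) : ℝ) : ℂ))
      ((((A * ω) * Real.cos (ω * t) : ℝ) : ℂ)
        + Complex.I * ((-(B * ω) * Real.sin (ω * t) : ℝ) : ℂ)) t := by
  exact ((sin_deriv A ω t).ofReal_comp).add (((cos_deriv B ω t).ofReal_comp).const_mul Complex.I)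

/-- Harmonic oscillator (`α = -2`) counterexample to the generalised Saari
conjecture: elliptic motions with constant moment of inertia. -/
theorem harmonic_oscillator_counterexample (N : ℕ)
    (m : Fin N → ℝ) (hm : ∀ k, 0 < m k)
    (a b : Fin N → ℝ) (ω : ℝ) (hω : 0 < ω) (hω2 : ω ^ 2 = ∑ k, m k)
    (ha : ∑ k, m k * a k = 0) (hb : ∑ k, m k * b k = 0) :
    let q : Fin N → ℝ → ℂ := fun k t =>
      ((a k * Real.cos (ω * t) : ℝ) : ℂ) + Complex.I * ((b k * Real.sin (ω * t) : ℝ) : ℂ)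
    (∀ k t, (m k : ℂ) * deriv (deriv (q k)) t
        = ∑ i ∈ Finset.univ.erase k, (m i * m k : ℂ) * (q i t - q k t)) ∧
    (∀ c : ℝ, (∑ k, m k * a k ^ 2 = c) → (∑ k, m k * b k ^ 2 = c) →
      ∀ t, ∑ k, m k * ‖q k t‖ ^ 2 = c) := by
  intro q
  have hd1 : ∀ k, deriv (q k) = fun t =>
      ((-(a k * ω) * Real.sin (ω * t) : ℝ) : ℂ)
        + Complex.I * (((b k * ω) * Real.cos (ω * t) : ℝ) : ℂ) := by
    intro k; funext t; exact (q_deriv (a k) (b k) ω t).deriv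
  have hd2 : ∀ k t, deriv (deriv (q k)) t = -(ω ^ 2 : ℂ) * q k t := by
    intro k t
    rw [hd1]
    rw [(q_deriv2 (-(a k * ω)) (b k * ω) ω t).deriv]
    simp only [q]
    push_cast
    ring
  constructor
  · intro k t
    rw [hd2]
    have hsum : ∑ i, (m i : ℂ) * q i t = 0 := by
      have h : ∑ i, (m i : ℂ) * q i t
          = Complex.cos (ω * t) * ∑ i, ((m i * a i : ℝ) : ℂ)
            + Complex.I * Complex.sin (ω * t) * ∑ i, ((m i * b i : ℝ) : ℂ) := by
        rw [Finset.mul_sum, Finset.mul_sum, ← Finset.sum_add_distrib]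
        refine Finset.sum_congr rfl fun i _ => ?_
        simp only [q]; push_cast; ring
      rw [h, ← Complex.ofReal_sum, ← Complex.ofReal_sum, ha, hb]
      simp
    have herase : ∑ i ∈ Finset.univ.erase k, (m i * m k : ℂ) * (q i t - q k t)
        = (∑ i, (m i * m k : ℂ) * (q i t - q k t)) - (m k * m k : ℂ) * (q k t - q k t) := by
      rw [Finset.sum_erase_eq_sub (Finset.mem_univ k)]
    rw [herase]
    have hexp : ∑ i, (m i * m k : ℂ) * (q i t - q k t)
        = (m k : ℂ) * (∑ i, (m i : ℂ) * q i t) - (m k : ℂ) * q k t * ((∑ i, m i : ℝ) : ℂ) := by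
      have h : ∑ i, (m i * m k : ℂ) * (q i t - q k t)
          = ∑ i, ((m k : ℂ) * ((m i : ℂ) * q i t) - ((m k : ℂ) * q k t) * ((m i : ℝ) : ℂ)) := by
        refine Finset.sum_congr rfl fun i _ => ?_
        push_cast; ring
      rw [h, Finset.sum_sub_distrib, ← Finset.mul_sum, ← Finset.mul_sum, ← Complex.ofReal_sum]
    rw [hexp, hsum, ← hω2]
    push_cast
    ring
  · intro c hca hcb t
    have habs : ∀ k, ‖q k t‖ ^ 2
        = (a k * Real.cos (ω * t)) ^ 2 + (b k * Real.sin (ω * t)) ^ 2 := by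
      intro k
      rw [← Complex.normSq_eq_norm_sq]
      simp only [q]
      rw [mul_comm Complex.I, Complex.normSq_add_mul_I]
    calc ∑ k, m k * ‖q k t‖ ^ 2
        = ∑ k, (m k * a k ^ 2 * Real.cos (ω * t) ^ 2
            + m k * b k ^ 2 * Real.sin (ω * t) ^ 2) := by
          refine Finset.sum_congr rfl fun k _ => ?_
          rw [habs k]; ring
      _ = (∑ k, m k * a k ^ 2) * Real.cos (ω * t) ^ 2
            + (∑ k, m k * b k ^ 2) * Real.sin (ω * t) ^ 2 := by
          rw [Finset.sum_add_distrib, ← Finset.sum_mul, ← Finset.sum_mul]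
      _ = c := by
          rw [hca, hcb, ← mul_add, Real.cos_sq_add_sin_sq, mul_one]
end

section
/- Saari's relation: along any solution of the reduced equations of motion with conserved energy E = ṙ²/2 + (C² + v²)/(2r²) − μ/(α r^α), where v² = r⁴|η̇|²/(1+|η|²)² and r satisfies r̈ = C²/r³ + r|η̇|²/(1+|η|²)² − μ(η)/r^{α+1}, one has dμ/dt = (α r^{α−2}/2) d(v²)/dt. Consequently, μ(η(t)) is constant if and only if v² is constant. -/
/-- Saari's relation `dμ/dt = (α r^{α-2}/2) d(v²)/dt` along solutions of the
reduced equations of motion, and the consequence that `μ` is constant iff `v²`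
is constant. -/
theorem saari_relation (α : ℝ) (hα : α ≠ 0) (C E : ℝ)
    (r x y μ : ℝ → ℝ)
    (hr : ∀ t, 0 < r t)
    (hrsm : ContDiff ℝ 2 r) (hxsm : Differentiable ℝ x) (hysm : Differentiable ℝ y)
    (hμsm : Differentiable ℝ μ)
    (v2 : ℝ → ℝ)
    (hv2 : v2 = fun t => r t ^ 4 * ((deriv x t) ^ 2 + (deriv y t) ^ 2)
        / (1 + x t ^ 2 + y t ^ 2) ^ 2)
    (hv2sm : Differentiable ℝ v2)
    (henergy : ∀ t, E = (deriv r t) ^ 2 / 2 + (C ^ 2 + v2 t) / (2 * r t ^ 2)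
        - μ t / (α * r t ^ α))
    (hradial : ∀ t, deriv (deriv r) t = C ^ 2 / r t ^ 3
        + r t * ((deriv x t) ^ 2 + (deriv y t) ^ 2) / (1 + x t ^ 2 + y t ^ 2) ^ 2
        - μ t / r t ^ (α + 1)) :
    (∀ t, deriv μ t = (α * r t ^ (α - 2) / 2) * deriv v2 t) ∧
    ((∀ s t, μ s = μ t) ↔ (∀ s t, v2 s = v2 t)) := by
  have hrd : Differentiable ℝ r := hrsm.differentiable (by norm_num)
  have hrd2 : Differentiable ℝ (deriv r) := by
    have := (contDiff_succ_iff_deriv.mp (by norm_num at hrsm ⊢; exact hrsm : ContDiff ℝ (1+1) r)).2.2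
    exact this.differentiable (by norm_num)
  have key : ∀ t, deriv μ t = (α * r t ^ (α - 2) / 2) * deriv v2 t := by
    intro t
    have hR : r t ≠ 0 := (hr t).ne'
    have hP : r t ^ α ≠ 0 := (Real.rpow_pos_of_pos (hr t) α).ne'
    -- rewrite radial equation in terms of v2
    have hden : (1 + x t ^ 2 + y t ^ 2) ^ 2 ≠ 0 := by positivity
    have hrad : deriv (deriv r) t
        = C ^ 2 / r t ^ 3 + v2 t / r t ^ 3 - μ t / r t ^ (α + 1) := by
      rw [hradial t, hv2]; field_simp
    -- derivative of the (constant) energy function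
    have h1 : HasDerivAt r (deriv r t) t := (hrd t).hasDerivAt
    have h2 : HasDerivAt (deriv r) (deriv (deriv r) t) t := (hrd2 t).hasDerivAt
    have hv2' : HasDerivAt v2 (deriv v2 t) t := (hv2sm t).hasDerivAt
    have hμ' : HasDerivAt μ (deriv μ t) t := (hμsm t).hasDerivAt
    have hA : HasDerivAt (fun s => (deriv r s) ^ 2 / 2)
        ((2 * deriv r t ^ 1 * deriv (deriv r) t) / 2) t := (h2.pow 2).div_const 2
    have hB : HasDerivAt (fun s => (C ^ 2 + v2 s) / (2 * r s ^ 2))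
        ((deriv v2 t * (2 * r t ^ 2) - (C ^ 2 + v2 t) * (2 * (2 * r t ^ 1 * deriv r t)))
          / (2 * r t ^ 2) ^ 2) t := by
      have := ((hasDerivAt_const t (C^2)).add hv2').div ((h1.pow 2).const_mul 2)
        (mul_ne_zero two_ne_zero (pow_ne_zero _ hR))
      exact this.congr_deriv (by norm_num)
    have hC : HasDerivAt (fun s => μ s / (α * r s ^ α))
        ((deriv μ t * (α * r t ^ α) - μ t * (α * (deriv r t * α * r t ^ (α - 1))))
          / (α * r t ^ α) ^ 2) t := by
      exact hμ'.div ((h1.rpow_const (Or.inl hR)).const_mul α) (by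
        exact mul_ne_zero hα hP)
    have hH : HasDerivAt (fun s => (deriv r s) ^ 2 / 2 + (C ^ 2 + v2 s) / (2 * r s ^ 2)
        - μ s / (α * r s ^ α))
        ((2 * deriv r t ^ 1 * deriv (deriv r) t) / 2
          + (deriv v2 t * (2 * r t ^ 2) - (C ^ 2 + v2 t) * (2 * (2 * r t ^ 1 * deriv r t)))
          / (2 * r t ^ 2) ^ 2
          - (deriv μ t * (α * r t ^ α) - μ t * (α * (deriv r t * α * r t ^ (α - 1))))
          / (α * r t ^ α) ^ 2) t := (hA.add hB).sub hC
    have hconst : (fun s => (deriv r s) ^ 2 / 2 + (C ^ 2 + v2 s) / (2 * r s ^ 2)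
        - μ s / (α * r s ^ α)) = fun _ => E := by
      funext s; exact (henergy s).symm
    rw [hconst] at hH
    have hD0 := hH.unique (hasDerivAt_const t E)
    rw [hrad] at hD0
    -- rpow arithmetic
    have e1 : r t ^ (α - 1) = r t ^ α / r t := by
      rw [Real.rpow_sub (hr t), Real.rpow_one]
    have e2 : r t ^ (α + 1) = r t ^ α * r t := by
      rw [Real.rpow_add (hr t), Real.rpow_one]
    have e3 : r t ^ (α - 2) = r t ^ α / r t ^ 2 := by
      rw [show (2:ℝ) = ((2:ℕ):ℝ) by norm_num, Real.rpow_sub (hr t), Real.rpow_natCast]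
    rw [e1, e2] at hD0
    rw [e3]
    field_simp at hD0 ⊢
    have hfac : (4 * α * (r t ^ α) ^ 2 * r t ^ 7)
        * (α * r t ^ α * deriv v2 t - deriv μ t * (r t ^ 2 * 2)) = 0 := by
      linear_combination (4 * α * (r t ^ α) ^ 2 * r t ^ 6) * hD0
    have hne : (4 * α * (r t ^ α) ^ 2 * r t ^ 7) ≠ 0 :=
      mul_ne_zero (mul_ne_zero (mul_ne_zero four_ne_zero hα) (pow_ne_zero _ hP))
        (pow_ne_zero _ hR)
    have := (mul_eq_zero.mp hfac).resolve_left hne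
    linarith
  refine ⟨key, ?_⟩
  have hcoef : ∀ t, α * r t ^ (α - 2) / 2 ≠ 0 := fun t => by
    have := (Real.rpow_pos_of_pos (hr t) (α - 2)).ne'
    positivity
  constructor
  · intro h s t
    have hd : ∀ u, deriv v2 u = 0 := by
      intro u
      have : deriv μ u = 0 := by
        have : μ = fun _ => μ 0 := funext fun s => h s 0
        rw [this]; simp
      rw [key u] at this
      exact (mul_eq_zero.mp this).resolve_left (hcoef u)
    exact is_const_of_deriv_eq_zero hv2sm hd s t
  · intro h s t
    have hd : ∀ u, deriv μ u = 0 := by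
      intro u
      have : deriv v2 u = 0 := by
        have : v2 = fun _ => v2 0 := funext fun s => h s 0
        rw [this]; simp
      rw [key u, this, mul_zero]
    exact is_const_of_deriv_eq_zero hμsm hd s t
end

section
/- Shape sphere metric in bipolar coordinates: under the change of variables x = (m1−m2)√n/(2(m1+m2)) + (√n/2)(r2² − r1²), y = (√n/2)·sqrt((1−(r1−r2)²)((r1+r2)²−1)), with n = (m1+m2)² m3/((m1+m2+m3) m1 m2), the metric ds² = (dx² + dy²)/(1+x²+y²)² equals ds² = 4 m1 m2 m3 (m1+m2+m3) r1 r2 (r1 r2 (dr1² + dr2²) − (r1² + r2² − 1) dr1 dr2) / ((1−(r1−r2)²)((r1+r2)²−1)(m1 m2 + m2 m3 r1² + m3 m1 r2²)²). -/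
set_option maxHeartbeats 2000000


/-- The shape-sphere metric `ds² = (dx²+dy²)/(1+x²+y²)²` in two-center bipolar
coordinates `(r1, r2)`. -/
theorem shape_sphere_metric_bipolar (m1 m2 m3 : ℝ)
    (hm1 : 0 < m1) (hm2 : 0 < m2) (hm3 : 0 < m3)
    (r1 r2 : ℝ) (hr1 : 0 < r1) (hr2 : 0 < r2)
    (htri1 : |r1 - r2| < 1) (htri2 : 1 < r1 + r2) :
    let n : ℝ := (m1 + m2) ^ 2 * m3 / ((m1 + m2 + m3) * m1 * m2)
    let X : ℝ → ℝ → ℝ := fun s t =>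
      (m1 - m2) * Real.sqrt n / (2 * (m1 + m2)) + (Real.sqrt n / 2) * (t ^ 2 - s ^ 2)
    let Y : ℝ → ℝ → ℝ := fun s t =>
      (Real.sqrt n / 2) * Real.sqrt ((1 - (s - t) ^ 2) * ((s + t) ^ 2 - 1))
    ∀ a b : ℝ,
      let dx : ℝ := deriv (fun s => X s r2) r1 * a + deriv (fun t => X r1 t) r2 * b
      let dy : ℝ := deriv (fun s => Y s r2) r1 * a + deriv (fun t => Y r1 t) r2 * b
      (dx ^ 2 + dy ^ 2) / (1 + X r1 r2 ^ 2 + Y r1 r2 ^ 2) ^ 2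
        = 4 * m1 * m2 * m3 * (m1 + m2 + m3) * r1 * r2
            * (r1 * r2 * (a ^ 2 + b ^ 2) - (r1 ^ 2 + r2 ^ 2 - 1) * a * b)
          / ((1 - (r1 - r2) ^ 2) * ((r1 + r2) ^ 2 - 1)
            * (m1 * m2 + m2 * m3 * r1 ^ 2 + m3 * m1 * r2 ^ 2) ^ 2) := by
  intro n X Y a b
  have hm12 : (0:ℝ) < m1 + m2 := by linarith
  have hm123 : (0:ℝ) < m1 + m2 + m3 := by linarith
  have hn : 0 < n := by
    have : (0:ℝ) < (m1 + m2) ^ 2 * m3 := by positivity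
    exact div_pos this (by positivity)
  set sn : ℝ := Real.sqrt n with hsn_def
  have hsn2 : sn ^ 2 = n := Real.sq_sqrt hn.le
  have habs := abs_lt.mp htri1
  have hP1 : (0:ℝ) < 1 - (r1 - r2) ^ 2 := by nlinarith [habs.1, habs.2]
  have hP2 : (0:ℝ) < (r1 + r2) ^ 2 - 1 := by nlinarith
  set P : ℝ := (1 - (r1 - r2) ^ 2) * ((r1 + r2) ^ 2 - 1) with hP_def
  have hP : 0 < P := mul_pos hP1 hP2
  set Q : ℝ := Real.sqrt P with hQ_def
  have hQ : 0 < Q := Real.sqrt_pos.mpr hP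
  have hQ2 : Q ^ 2 = P := Real.sq_sqrt hP.le
  set Ps : ℝ := -(2 * (r1 - r2)) * ((r1 + r2) ^ 2 - 1) + (1 - (r1 - r2) ^ 2) * (2 * (r1 + r2))
    with hPs_def
  set Pt : ℝ := (2 * (r1 - r2)) * ((r1 + r2) ^ 2 - 1) + (1 - (r1 - r2) ^ 2) * (2 * (r1 + r2))
    with hPt_def
  -- derivatives of X
  have hX1 : deriv (fun s => X s r2) r1 = -(sn * r1) := by
    have h : HasDerivAt (fun s : ℝ => X s r2) (-(sn * r1)) r1 := by
      have h0 := (((hasDerivAt_pow 2 r1).const_sub (r2 ^ 2)).const_mul (sn / 2)).const_add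
        ((m1 - m2) * sn / (2 * (m1 + m2)))
      refine h0.congr_deriv ?_
      push_cast [id_eq]; ring
    exact h.deriv
  have hX2 : deriv (fun t => X r1 t) r2 = sn * r2 := by
    have h : HasDerivAt (fun t : ℝ => X r1 t) (sn * r2) r2 := by
      have h0 := (((hasDerivAt_pow 2 r2).sub_const (r1 ^ 2)).const_mul (sn / 2)).const_add
        ((m1 - m2) * sn / (2 * (m1 + m2)))
      refine h0.congr_deriv ?_
      push_cast [id_eq]; ring
    exact h.deriv
  -- derivatives of Y
  have hY1 : deriv (fun s => Y s r2) r1 = sn / 2 * (Ps / (2 * Q)) := by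
    have hA : HasDerivAt (fun s : ℝ => 1 - (s - r2) ^ 2) (-(2 * (r1 - r2))) r1 := by
      have h0 := (((hasDerivAt_id r1).sub_const r2).pow 2).const_sub (1:ℝ)
      refine h0.congr_deriv ?_
      push_cast [id_eq]; ring
    have hB : HasDerivAt (fun s : ℝ => (s + r2) ^ 2 - 1) (2 * (r1 + r2)) r1 := by
      have h0 := (((hasDerivAt_id r1).add_const r2).pow 2).sub_const (1:ℝ)
      refine h0.congr_deriv ?_
      push_cast [id_eq]; ring
    have hp : HasDerivAt (fun s : ℝ => (1 - (s - r2) ^ 2) * ((s + r2) ^ 2 - 1))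
        (-(2 * (r1 - r2)) * ((r1 + r2) ^ 2 - 1) + (1 - (r1 - r2) ^ 2) * (2 * (r1 + r2))) r1 :=
      hA.mul hB
    have hsq : HasDerivAt Real.sqrt (1 / (2 * Real.sqrt ((1 - (r1 - r2) ^ 2) * ((r1 + r2) ^ 2 - 1))))
        ((1 - (r1 - r2) ^ 2) * ((r1 + r2) ^ 2 - 1)) := Real.hasDerivAt_sqrt hP.ne'
    have hcomp := (hsq.comp r1 hp).const_mul (sn / 2)
    have h : HasDerivAt (fun s : ℝ => Y s r2) (sn / 2 * (Ps / (2 * Q))) r1 := by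
      refine hcomp.congr_deriv ?_
      rw [hPs_def, hQ_def, hP_def]
      ring
    exact h.deriv
  have hY2 : deriv (fun t => Y r1 t) r2 = sn / 2 * (Pt / (2 * Q)) := by
    have hA : HasDerivAt (fun t : ℝ => 1 - (r1 - t) ^ 2) (2 * (r1 - r2)) r2 := by
      have h0 := (((hasDerivAt_id r2).const_sub r1).pow 2).const_sub (1:ℝ)
      refine h0.congr_deriv ?_
      push_cast [id_eq]; ring
    have hB : HasDerivAt (fun t : ℝ => (r1 + t) ^ 2 - 1) (2 * (r1 + r2)) r2 := by
      have h0 := (((hasDerivAt_id r2).const_add r1).pow 2).sub_const (1:ℝ)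
      refine h0.congr_deriv ?_
      push_cast [id_eq]; ring
    have hp : HasDerivAt (fun t : ℝ => (1 - (r1 - t) ^ 2) * ((r1 + t) ^ 2 - 1))
        (2 * (r1 - r2) * ((r1 + r2) ^ 2 - 1) + (1 - (r1 - r2) ^ 2) * (2 * (r1 + r2))) r2 :=
      hA.mul hB
    have hsq : HasDerivAt Real.sqrt (1 / (2 * Real.sqrt ((1 - (r1 - r2) ^ 2) * ((r1 + r2) ^ 2 - 1))))
        ((1 - (r1 - r2) ^ 2) * ((r1 + r2) ^ 2 - 1)) := Real.hasDerivAt_sqrt hP.ne'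
    have hcomp := (hsq.comp r2 hp).const_mul (sn / 2)
    have h : HasDerivAt (fun t : ℝ => Y r1 t) (sn / 2 * (Pt / (2 * Q))) r2 := by
      refine hcomp.congr_deriv ?_
      rw [hPt_def, hQ_def, hP_def]
      ring
    exact h.deriv
  intro dx dy
  have hdx : dx = -(sn * r1) * a + sn * r2 * b := by
    show deriv (fun s => X s r2) r1 * a + deriv (fun t => X r1 t) r2 * b = _
    rw [hX1, hX2]
  have hdy : dy = sn / 2 * (Ps / (2 * Q)) * a + sn / 2 * (Pt / (2 * Q)) * b := by
    show deriv (fun s => Y s r2) r1 * a + deriv (fun t => Y r1 t) r2 * b = _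
    rw [hY1, hY2]
  set u : ℝ := (m1 - m2) / (2 * (m1 + m2)) + (r2 ^ 2 - r1 ^ 2) / 2 with hu_def
  have hx : X r1 r2 = sn * u := by
    show (m1 - m2) * sn / (2 * (m1 + m2)) + sn / 2 * (r2 ^ 2 - r1 ^ 2) = sn * u
    rw [hu_def]
    field_simp
  have hy : Y r1 r2 = sn / 2 * Q := by
    show sn / 2 * Real.sqrt ((1 - (r1 - r2) ^ 2) * ((r1 + r2) ^ 2 - 1)) = sn / 2 * Q
    rw [hQ_def, hP_def]
  have hdx2 : dx ^ 2 = n * (r2 * b - r1 * a) ^ 2 := by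
    rw [hdx, ← hsn2]; ring
  have hdy2 : dy ^ 2 = n * (Ps * a + Pt * b) ^ 2 / (16 * P) := by
    rw [hdy, ← hsn2, ← hQ2]
    field_simp
    ring
  have hxy : 1 + X r1 r2 ^ 2 + Y r1 r2 ^ 2 = 1 + n * u ^ 2 + n * P / 4 := by
    rw [hx, hy, ← hsn2, ← hQ2]; ring
  have hnval : n = (m1 + m2) ^ 2 * m3 / ((m1 + m2 + m3) * m1 * m2) := rfl
  set M : ℝ := m1 * m2 + m2 * m3 * r1 ^ 2 + m3 * m1 * r2 ^ 2 with hM_def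
  have hM : (0:ℝ) < M := by rw [hM_def]; positivity
  have key1 : 16 * P * (r2 * b - r1 * a) ^ 2 + (Ps * a + Pt * b) ^ 2
      = 64 * r1 * r2 * (r1 * r2 * (a ^ 2 + b ^ 2) - (r1 ^ 2 + r2 ^ 2 - 1) * a * b) := by
    rw [hP_def, hPs_def, hPt_def]; ring
  have key2 : 1 + n * u ^ 2 + n * P / 4
      = (m1 + m2) * M / ((m1 + m2 + m3) * m1 * m2) := by
    rw [hnval, hu_def, hP_def, hM_def]
    field_simp
    ring
  have hLHSnum : n * (r2 * b - r1 * a) ^ 2 + n * (Ps * a + Pt * b) ^ 2 / (16 * P)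
      = n * (64 * r1 * r2 * (r1 * r2 * (a ^ 2 + b ^ 2) - (r1 ^ 2 + r2 ^ 2 - 1) * a * b))
        / (16 * P) := by
    rw [← key1]
    field_simp
  rw [hdx2, hdy2, hxy, hLHSnum, key2, hnval]
  field_simp
  ring
end
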